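/- For every pebble distribution p on the ladder P_n□P_2 and every vertex x, one has L_p(x) = ⌊Lw_p(x)⌋ and R_p(x) = ⌊Rw_p(x)⌋. -/

import Mathlib

open SimpleGraph

/-- A single rubbling move on `G`: either a pebbling move (remove two pebbles at `v`,
add one at an adjacent vertex `u`) or a strict rubbling move (remove one pebble each at
distinct `v` and `w`, both adjacent to `u`, and add one pebble at `u`). -/
def RubblingStep {V : Type*} [DecidableEq V] (G : SimpleGraph V) (p q : V → ℕ) : Prop :=
  (∃ v u, G.Adj v u ∧ 2 ≤ p v ∧
      q = fun x => if x = v then p x - 2 else if x = u then p x + 1 else p x) ∨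
  (∃ v w u, v ≠ w ∧ G.Adj v u ∧ G.Adj w u ∧ 1 ≤ p v ∧ 1 ≤ p w ∧
      q = fun x => if x = v then p x - 1 else if x = w then p x - 1
          else if x = u then p x + 1 else p x)

/-- `q` is obtainable from `p` by an executable rubbling sequence. -/
def RubblingReach {V : Type*} [DecidableEq V] (G : SimpleGraph V) : (V → ℕ) → (V → ℕ) → Prop :=
  Relation.ReflTransGen (RubblingStep G)

/-- The vertex `u` is `k`-reachable from the distribution `p`. -/
def KReachable {V : Type*} [DecidableEq V] (G : SimpleGraph V) (p : V → ℕ) (u : V) (k : ℕ) : Prop :=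
  ∃ q, RubblingReach G p q ∧ k ≤ q u

/-- `p` is solvable: every vertex is reachable. -/
def Solvable {V : Type*} [DecidableEq V] (G : SimpleGraph V) (p : V → ℕ) : Prop :=
  ∀ u, KReachable G p u 1

/-- The optimal rubbling number: the minimum size of a solvable distribution. -/
noncomputable def optRub {V : Type*} [DecidableEq V] [Fintype V] (G : SimpleGraph V) : ℕ :=
  sInf {m | ∃ p : V → ℕ, Solvable G p ∧ ∑ v, p v = m}

/-- The ladder `P_n □ P_2`. -/
def ladder (n : ℕ) : SimpleGraph (Fin n × Fin 2) :=
  pathGraph n □ pathGraph 2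

/-- A rubbling move all of whose vertices lie in the set `S`. -/
def RubblingStepOn {V : Type*} [DecidableEq V] (G : SimpleGraph V) (S : Set V)
    (p q : V → ℕ) : Prop :=
  (∃ v u, v ∈ S ∧ u ∈ S ∧ G.Adj v u ∧ 2 ≤ p v ∧
      q = fun x => if x = v then p x - 2 else if x = u then p x + 1 else p x) ∨
  (∃ v w u, v ∈ S ∧ w ∈ S ∧ u ∈ S ∧ v ≠ w ∧ G.Adj v u ∧ G.Adj w u ∧ 1 ≤ p v ∧ 1 ≤ p w ∧
      q = fun x => if x = v then p x - 1 else if x = w then p x - 1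
          else if x = u then p x + 1 else p x)

/-- `q` is obtainable from `p` by an executable rubbling sequence all of whose
moves act only on vertices of `S`. -/
def RubblingReachOn {V : Type*} [DecidableEq V] (G : SimpleGraph V) (S : Set V) :
    (V → ℕ) → (V → ℕ) → Prop :=
  Relation.ReflTransGen (RubblingStepOn G S)

/-- `x` is left `k`-reachable: `k`-reachable from the restriction of `p` inside the
induced subgraph on the columns up to the column of `x`. -/
def LeftKReachable (n : ℕ) (p : Fin n × Fin 2 → ℕ) (x : Fin n × Fin 2) (k : ℕ) : Prop :=
  ∃ q, RubblingReachOn (ladder n) {v | v.1 ≤ x.1}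
      (fun v => if v.1 ≤ x.1 then p v else 0) q ∧ k ≤ q x

/-- `x` is right `k`-reachable: `k`-reachable from the restriction of `p` inside the
induced subgraph on the columns from the column of `x` onwards. -/
def RightKReachable (n : ℕ) (p : Fin n × Fin 2 → ℕ) (x : Fin n × Fin 2) (k : ℕ) : Prop :=
  ∃ q, RubblingReachOn (ladder n) {v | x.1 ≤ v.1}
      (fun v => if x.1 ≤ v.1 then p v else 0) q ∧ k ≤ q x

/-- `L_p(x)`: the largest `k` for which `x` is left `k`-reachable. -/
noncomputable def Lnum (n : ℕ) (p : Fin n × Fin 2 → ℕ) (x : Fin n × Fin 2) : ℕ :=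
  sSup {k | LeftKReachable n p x k}

/-- `R_p(x)`: the largest `k` for which `x` is right `k`-reachable. -/
noncomputable def Rnum (n : ℕ) (p : Fin n × Fin 2 → ℕ) (x : Fin n × Fin 2) : ℕ :=
  sSup {k | RightKReachable n p x k}

/-- The left weight function `Lw_p(x) = Σ_{v in columns ≤ col(x)} (1/2)^{d(x,v)} p(v)`. -/
noncomputable def Lw (n : ℕ) (p : Fin n × Fin 2 → ℕ) (x : Fin n × Fin 2) : ℝ :=
  ∑ v : Fin n × Fin 2,
    if v.1 ≤ x.1 then ((1 : ℝ) / 2) ^ ((ladder n).dist x v) * (p v : ℝ) else 0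

/-- The right weight function. -/
noncomputable def Rw (n : ℕ) (p : Fin n × Fin 2 → ℕ) (x : Fin n × Fin 2) : ℝ :=
  ∑ v : Fin n × Fin 2,
    if x.1 ≤ v.1 then ((1 : ℝ) / 2) ^ ((ladder n).dist x v) * (p v : ℝ) else 0

namespace LadderProof
open SimpleGraph Finset

/-- symmetric distance on ℕ. -/
def cdist (a b : ℕ) : ℕ := (a - b) + (b - a)

variable {n : ℕ}

lemma ladder_adj {u v : Fin n × Fin 2} : (ladder n).Adj u v ↔
    (((u.1.val + 1 = v.1.val ∨ v.1.val + 1 = u.1.val) ∧ u.2 = v.2) ∨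
      (u.1 = v.1 ∧ u.2 ≠ v.2)) := by
  have h2 : u.2.val < 2 := u.2.isLt
  have h2' : v.2.val < 2 := v.2.isLt
  rw [ladder, boxProd_adj, pathGraph_adj, pathGraph_adj]
  simp only [Fin.ext_iff, ne_eq]
  omega

/-- distance formula value. -/
def dF (x v : Fin n × Fin 2) : ℕ := cdist x.1.val v.1.val + (if x.2 = v.2 then 0 else 1)

lemma ladder_connected (hn : 0 < n) : (ladder n).Connected := by
  obtain ⟨m, rfl⟩ : ∃ m, n = m + 1 := ⟨n - 1, by omega⟩
  exact connected_boxProd.mpr ⟨pathGraph_connected m, pathGraph_connected 1⟩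

lemma dF_lip {u v w : Fin n × Fin 2} (h : (ladder n).Adj u v) : dF u w ≤ dF v w + 1 := by
  rcases ladder_adj.mp h with ⟨h1, h2⟩ | ⟨h1, h2⟩
  · simp only [dF, h2, h1]
    have : cdist u.1.val w.1.val ≤ cdist v.1.val w.1.val + 1 := by unfold cdist; omega
    omega
  · simp only [dF, h1]
    by_cases h3 : u.2 = w.2 <;> by_cases h4 : v.2 = w.2
    · exact absurd (h3.trans h4.symm) h2
    all_goals simp [h3, h4] <;> omega

lemma dF_le_walk {x v : Fin n × Fin 2} (wk : (ladder n).Walk x v) : dF x v ≤ wk.length := by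
  induction wk with
  | nil => simp [dF, cdist]
  | @cons a b c h w ih =>
    have := dF_lip (w := c) h
    simp only [Walk.length_cons]
    omega

lemma dF_le_dist (x v : Fin n × Fin 2) : dF x v ≤ (ladder n).dist x v := by
  obtain ⟨wk, hl⟩ := (ladder_connected x.1.pos).exists_walk_length_eq_dist x v
  rw [← hl]; exact dF_le_walk wk

lemma horiz_dist_le (k : ℕ) : ∀ (a b : Fin n) (r : Fin 2),
    (a.val + k = b.val ∨ b.val + k = a.val) →
    (ladder n).dist (a, r) (b, r) ≤ k := by
  induction k with
  | zero =>
    intro a b r h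
    have : a = b := Fin.ext (by omega)
    subst this; simp
  | succ k ih =>
    intro a b r h
    have hconn := ladder_connected a.pos
    rcases h with h | h
    · have hc : a.val + 1 < n := by have := b.isLt; omega
      set c : Fin n := ⟨a.val + 1, hc⟩ with hcdef
      have hadj : (ladder n).Adj (a, r) (c, r) := ladder_adj.mpr (Or.inl ⟨Or.inl rfl, rfl⟩)
      calc (ladder n).dist (a, r) (b, r)
          ≤ (ladder n).dist (a, r) (c, r) + (ladder n).dist (c, r) (b, r) :=
            hconn.dist_triangle
        _ ≤ 1 + k := add_le_add (by simpa using dist_le hadj.toWalk)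
            (ih c b r (Or.inl (by simp [hcdef]; omega)))
        _ = k + 1 := by omega
    · have hc : a.val - 1 < n := by have := a.isLt; omega
      set c : Fin n := ⟨a.val - 1, hc⟩ with hcdef
      have hadj : (ladder n).Adj (a, r) (c, r) := by
        refine ladder_adj.mpr (Or.inl ⟨Or.inr ?_, rfl⟩); simp [hcdef]; omega
      calc (ladder n).dist (a, r) (b, r)
          ≤ (ladder n).dist (a, r) (c, r) + (ladder n).dist (c, r) (b, r) :=
            hconn.dist_triangle
        _ ≤ 1 + k := add_le_add (by simpa using dist_le hadj.toWalk)
            (ih c b r (Or.inr (by simp [hcdef]; omega)))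
        _ = k + 1 := by omega

lemma dist_le_dF (x v : Fin n × Fin 2) : (ladder n).dist x v ≤ dF x v := by
  have hconn := ladder_connected x.1.pos
  have h1 : (ladder n).dist x (v.1, x.2) ≤ cdist x.1.val v.1.val :=
    horiz_dist_le _ x.1 v.1 x.2 (by unfold cdist; omega)
  have h2 : (ladder n).dist (v.1, x.2) v ≤ (if x.2 = v.2 then 0 else 1) := by
    by_cases h : x.2 = v.2
    · simp [h]
    · have hadj : (ladder n).Adj (v.1, x.2) v := ladder_adj.mpr (Or.inr ⟨rfl, h⟩)
      simpa [h] using dist_le hadj.toWalk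
  calc (ladder n).dist x v ≤ _ + _ := hconn.dist_triangle (v := (v.1, x.2))
    _ ≤ dF x v := by rw [dF]; exact add_le_add h1 h2

lemma ladder_dist (x v : Fin n × Fin 2) : (ladder n).dist x v = dF x v :=
  le_antisymm (dist_le_dF x v) (dF_le_dist x v)


noncomputable def wt (x v : Fin n × Fin 2) : ℝ := ((1 : ℝ) / 2) ^ ((ladder n).dist x v)

lemma wt_pos (x v : Fin n × Fin 2) : 0 < wt x v := pow_pos (by norm_num) _

lemma wt_eq (x v : Fin n × Fin 2) : wt x v = ((1 : ℝ) / 2) ^ (dF x v) := by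
  rw [wt, ladder_dist]

lemma wt_self (x : Fin n × Fin 2) : wt x x = 1 := by
  rw [wt_eq]
  have : dF x x = 0 := by simp [dF, cdist]
  simp [this]

lemma dF_comm (x v : Fin n × Fin 2) : dF x v = dF v x := by
  unfold dF cdist
  have hc : (x.2 = v.2) ↔ (v.2 = x.2) := eq_comm
  rw [if_congr hc rfl rfl]
  omega

lemma wt_adj {x v u : Fin n × Fin 2} (h : (ladder n).Adj v u) : wt x u ≤ 2 * wt x v := by
  rw [wt_eq, wt_eq]
  have hd : dF x v ≤ dF x u + 1 := by
    rw [dF_comm x v, dF_comm x u]; exact dF_lip h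
  calc ((1:ℝ)/2) ^ dF x u = 2 * ((1:ℝ)/2) ^ (dF x u + 1) := by rw [pow_succ]; ring
    _ ≤ 2 * ((1:ℝ)/2) ^ (dF x v) := by
        have := pow_le_pow_of_le_one (by norm_num : (0:ℝ) ≤ 1/2) (by norm_num) hd
        linarith

noncomputable def Wt (x : Fin n × Fin 2) (q : Fin n × Fin 2 → ℕ) : ℝ :=
  ∑ v, wt x v * (q v : ℝ)

lemma Wt_step {S : Set (Fin n × Fin 2)} {q q' : Fin n × Fin 2 → ℕ}
    (h : RubblingStepOn (ladder n) S q q') (x : Fin n × Fin 2) : Wt x q' ≤ Wt x q := by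
  rcases h with ⟨v, u, _, _, hadj, h2, rfl⟩ | ⟨v, w0, u, _, _, _, hvw, ha1, ha2, hb1, hb2, rfl⟩
  · have hvu : v ≠ u := hadj.ne
    have expand : ∀ y, wt x y * (((if y = v then q y - 2 else if y = u then q y + 1 else q y : ℕ)) : ℝ)
        = wt x y * (q y : ℝ) + (if y = u then wt x y else 0) - (if y = v then 2 * wt x y else 0) := by
      intro y
      by_cases hy : y = v
      · subst hy
        have : (((q y - 2 : ℕ)) : ℝ) = (q y : ℝ) - 2 := by
          push_cast [h2]; ring
        simp [hvu, this]; ring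
      · by_cases hy2 : y = u
        · subst hy2; simp [hy]; push_cast; ring
        · simp [hy, hy2]
    have : Wt x (fun y => if y = v then q y - 2 else if y = u then q y + 1 else q y)
        = Wt x q + wt x u - 2 * wt x v := by
      rw [Wt, Wt]
      rw [Finset.sum_congr rfl (fun y _ => expand y)]
      rw [Finset.sum_sub_distrib, Finset.sum_add_distrib]
      simp [Finset.sum_ite_eq']
    rw [this]
    have := wt_adj (x := x) hadj
    linarith
  · have hvu : v ≠ u := ha1.ne
    have hwu : w0 ≠ u := ha2.ne
    have expand : ∀ y, wt x y * (((if y = v then q y - 1 else if y = w0 then q y - 1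
          else if y = u then q y + 1 else q y : ℕ)) : ℝ)
        = wt x y * (q y : ℝ) + (if y = u then wt x y else 0) - (if y = v then wt x y else 0)
          - (if y = w0 then wt x y else 0) := by
      intro y
      by_cases hy : y = v
      · subst hy
        have : (((q y - 1 : ℕ)) : ℝ) = (q y : ℝ) - 1 := by push_cast [hb1]; ring
        simp [hvu, hvw, this]; ring
      · by_cases hy2 : y = w0
        · subst hy2
          have : (((q y - 1 : ℕ)) : ℝ) = (q y : ℝ) - 1 := by push_cast [hb2]; ring
          simp [hy, hwu, this]; ring
        · by_cases hy3 : y = u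
          · subst hy3; simp [hy, hy2]; push_cast; ring
          · simp [hy, hy2, hy3]
    have heq : Wt x (fun y => if y = v then q y - 1 else if y = w0 then q y - 1
          else if y = u then q y + 1 else q y)
        = Wt x q + wt x u - wt x v - wt x w0 := by
      rw [Wt, Wt]
      rw [Finset.sum_congr rfl (fun y _ => expand y)]
      rw [Finset.sum_sub_distrib, Finset.sum_sub_distrib, Finset.sum_add_distrib]
      simp [Finset.sum_ite_eq']
    rw [heq]
    have h1 := wt_adj (x := x) ha1
    have h2 := wt_adj (x := x) ha2
    linarith

lemma Wt_reach {S : Set (Fin n × Fin 2)} {q q' : Fin n × Fin 2 → ℕ}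
    (h : RubblingReachOn (ladder n) S q q') (x : Fin n × Fin 2) : Wt x q' ≤ Wt x q := by
  induction h with
  | refl => exact le_rfl
  | tail _ hstep ih => exact le_trans (Wt_step hstep x) ih


lemma reach_strict {S : Set (Fin n × Fin 2)} {v w u : Fin n × Fin 2} {q : Fin n × Fin 2 → ℕ}
    (hv : v ∈ S) (hw : w ∈ S) (hu : u ∈ S) (hvw : v ≠ w)
    (h1 : (ladder n).Adj v u) (h2 : (ladder n).Adj w u) (hb1 : 1 ≤ q v) (hb2 : 1 ≤ q w) :
    RubblingReachOn (ladder n) S q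
      (fun y => if y = v then q y - 1 else if y = w then q y - 1 else if y = u then q y + 1
        else q y) :=
  Relation.ReflTransGen.single (Or.inr ⟨v, w, u, hv, hw, hu, hvw, h1, h2, hb1, hb2, rfl⟩)

lemma reach_pairs {S : Set (Fin n × Fin 2)} {v u : Fin n × Fin 2}
    (hv : v ∈ S) (hu : u ∈ S) (hadj : (ladder n).Adj v u) (q : Fin n × Fin 2 → ℕ) :
    RubblingReachOn (ladder n) S q
      (fun y => if y = v then q v % 2 else if y = u then q u + q v / 2 else q y) := by
  have hvu : v ≠ u := hadj.ne
  suffices H : ∀ (M : ℕ) (q : Fin n × Fin 2 → ℕ), q v ≤ M → RubblingReachOn (ladder n) S q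
      (fun y => if y = v then q v % 2 else if y = u then q u + q v / 2 else q y) from
    H (q v) q le_rfl
  intro M
  induction M with
  | zero =>
    intro q hq
    have : (fun y => if y = v then q v % 2 else if y = u then q u + q v / 2 else q y) = q := by
      funext y
      by_cases hy : y = v
      · subst hy; simp; omega
      · by_cases hy2 : y = u
        · subst hy2; simp [hy]; omega
        · simp [hy, hy2]
    rw [this]
    exact Relation.ReflTransGen.refl
  | succ M ih =>
    intro q hq
    by_cases hq2 : q v ≤ 1
    · have : (fun y => if y = v then q v % 2 else if y = u then q u + q v / 2 else q y) = q := by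
        funext y
        by_cases hy : y = v
        · subst hy; simp; omega
        · by_cases hy2 : y = u
          · subst hy2; simp [hy]; omega
          · simp [hy, hy2]
      rw [this]
      exact Relation.ReflTransGen.refl
    · push_neg at hq2
      set q₁ : Fin n × Fin 2 → ℕ :=
        fun y => if y = v then q y - 2 else if y = u then q y + 1 else q y with hq₁
      have hstep : RubblingStepOn (ladder n) S q q₁ :=
        Or.inl ⟨v, u, hv, hu, hadj, hq2, rfl⟩
      have hq₁v : q₁ v = q v - 2 := by simp [hq₁]
      have h2 : RubblingReachOn (ladder n) S q₁
          (fun y => if y = v then q₁ v % 2 else if y = u then q₁ u + q₁ v / 2 else q₁ y) :=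
        ih q₁ (by rw [hq₁v]; omega)
      have heq : (fun y => if y = v then q₁ v % 2 else if y = u then q₁ u + q₁ v / 2 else q₁ y)
          = (fun y => if y = v then q v % 2 else if y = u then q u + q v / 2 else q y) := by
        funext y
        by_cases hy : y = v
        · subst hy; simp [hq₁, hvu]; omega
        · by_cases hy2 : y = u
          · subst hy2
            have e2 : q₁ y = q y + 1 := by simp [hq₁, (Ne.symm hvu : y ≠ v)]
            simp [hy, e2, hq₁v]
            omega
          · simp [hy, hy2, hq₁]
      rw [heq] at h2
      exact Relation.ReflTransGen.head hstep h2


lemma fin2_eq_of_ne {a b c : Fin 2} (ha : a ≠ c) (hb : b ≠ c) : a = b := by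
  have h1 : a.val ≠ c.val := fun h => ha (Fin.ext h)
  have h2 : b.val ≠ c.val := fun h => hb (Fin.ext h)
  have := a.isLt; have := b.isLt; have := c.isLt
  exact Fin.ext (by omega)

/-- The region: columns `≥ m` up to the column of `x`, plus the single vertex in
column `m - 1`, row of `x`. -/
def Rg (x : Fin n × Fin 2) (m : ℕ) (v : Fin n × Fin 2) : Prop :=
  (m ≤ v.1.val ∨ (v.1.val + 1 = m ∧ v.2 = x.2)) ∧ v.1.val ≤ x.1.val

instance (x : Fin n × Fin 2) (m : ℕ) (v : Fin n × Fin 2) : Decidable (Rg x m v) := by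
  unfold Rg; infer_instance

noncomputable def WA (x : Fin n × Fin 2) (m : ℕ) (q : Fin n × Fin 2 → ℕ) : ℝ :=
  ∑ v, if Rg x m v then wt x v * (q v : ℝ) else 0

lemma WA_compare (x : Fin n × Fin 2) (m : ℕ) (hm : m ≤ x.1.val)
    (q q₂ : Fin n × Fin 2 → ℕ) (vc vc' : Fin n × Fin 2)
    (hvc1 : vc.1.val = m) (hvc2 : vc.2 = x.2)
    (hvc'1 : vc'.1.val = m) (hvc'2 : vc'.2 ≠ x.2)
    (Hoff : ∀ v, v ≠ vc → v ≠ vc' → ¬(v.1.val + 1 = m ∧ v.2 = x.2) → q₂ v = q v)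
    (C : (∑ v, if v.1.val + 1 = m ∧ v.2 = x.2 then q v else 0) + q vc' + 2 * q vc
        ≤ 2 * q₂ vc + 1) :
    WA x m q ≤ WA x (m + 1) q₂ + ((1:ℝ)/2) ^ (x.1.val - m + 1) := by
  set D := x.1.val - m with hD
  set ε : ℝ := ((1:ℝ)/2) ^ (D + 1) with hε
  have hε0 : 0 < ε := pow_pos (by norm_num) _
  have hvcne : vc ≠ vc' := by
    intro h; exact hvc'2 (h ▸ hvc2)
  have wvc : wt x vc = 2 * ε := by
    rw [wt_eq]
    have hd : dF x vc = D := by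
      unfold dF cdist; rw [hvc1, if_pos hvc2.symm]; omega
    rw [hd, hε, pow_succ]; ring
  have wvc' : wt x vc' = ε := by
    rw [wt_eq]
    have hd : dF x vc' = D + 1 := by
      unfold dF cdist
      rw [hvc'1, if_neg (fun h => hvc'2 h.symm)]
      omega
    rw [hd]
  have wz : ∀ v : Fin n × Fin 2, v.1.val + 1 = m ∧ v.2 = x.2 → wt x v = ε := by
    intro v ⟨h1, h2⟩
    rw [wt_eq]
    have hd : dF x v = D + 1 := by
      unfold dF cdist; rw [if_pos h2.symm]; omega
    rw [hd]
  -- the four summand families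
  set G : Fin n × Fin 2 → ℝ :=
    fun v => if Rg x (m+1) v ∧ v ≠ vc then wt x v * (q v : ℝ) else 0 with hG
  set A : Fin n × Fin 2 → ℝ :=
    fun v => if v.1.val + 1 = m ∧ v.2 = x.2 then ε * (q v : ℝ) else 0 with hA
  set B : Fin n × Fin 2 → ℝ := fun v => if v = vc' then ε * (q v : ℝ) else 0 with hB
  set Cc : Fin n × Fin 2 → ℝ := fun v => if v = vc then 2 * ε * (q v : ℝ) else 0 with hCc
  have hGnn : ∀ v, 0 ≤ G v := by
    intro v; rw [hG]; dsimp only; split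
    · exact mul_nonneg (le_of_lt (wt_pos x v)) (Nat.cast_nonneg _)
    · exact le_rfl
  have hAnn : ∀ v, 0 ≤ A v := by
    intro v; rw [hA]; dsimp only; split
    · positivity
    · exact le_rfl
  have hBnn : ∀ v, 0 ≤ B v := by
    intro v; rw [hB]; dsimp only; split
    · positivity
    · exact le_rfl
  have hCcnn : ∀ v, 0 ≤ Cc v := by
    intro v; rw [hCc]; dsimp only; split
    · positivity
    · exact le_rfl
  -- pointwise bound for the old weight
  have point : ∀ v, (if Rg x m v then wt x v * (q v : ℝ) else 0) ≤ G v + A v + B v + Cc v := by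
    intro v
    by_cases hv1 : v = vc
    · subst hv1
      have hRg : Rg x m v := ⟨Or.inl (le_of_eq hvc1.symm), hvc1 ▸ hm⟩
      have hAv : A v = 0 := by rw [hA]; dsimp only; rw [if_neg]; omega
      have hBv : B v = 0 := by rw [hB]; dsimp only; rw [if_neg hvcne]
      have hGv : G v = 0 := by rw [hG]; dsimp only; rw [if_neg]; simp
      have hCv : Cc v = 2 * ε * (q v : ℝ) := by rw [hCc]; dsimp only; rw [if_pos rfl]
      rw [if_pos hRg, hAv, hBv, hGv, hCv, wvc]
      ring_nf; exact le_rfl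
    · by_cases hv2 : v = vc'
      · subst hv2
        have hRg : Rg x m v := ⟨Or.inl (le_of_eq hvc'1.symm), hvc'1 ▸ hm⟩
        have hAv : A v = 0 := by rw [hA]; dsimp only; rw [if_neg]; omega
        have hBv : B v = ε * (q v : ℝ) := by rw [hB]; dsimp only; rw [if_pos rfl]
        have hGv : G v = 0 := by
          rw [hG]; dsimp only; rw [if_neg]
          intro ⟨⟨h1, _⟩, _⟩
          rcases h1 with h1 | ⟨h1, h2⟩
          · omega
          · exact hvc'2 h2
        have hCv : Cc v = 0 := by
          rw [hCc]; dsimp only; rw [if_neg (Ne.symm hvcne)]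
        rw [if_pos hRg, hAv, hBv, hGv, hCv, wvc']
        ring_nf; exact le_rfl
      · by_cases hv3 : v.1.val + 1 = m ∧ v.2 = x.2
        · have hRg : Rg x m v := ⟨Or.inr hv3, by omega⟩
          have hAv : A v = ε * (q v : ℝ) := by rw [hA]; dsimp only; rw [if_pos hv3]
          have hBv : B v = 0 := by rw [hB]; dsimp only; rw [if_neg hv2]
          have hGv : G v = 0 := by
            rw [hG]; dsimp only; rw [if_neg]
            intro ⟨⟨h1, _⟩, _⟩
            rcases h1 with h1 | ⟨h1, _⟩ <;> omega
          have hCv : Cc v = 0 := by rw [hCc]; dsimp only; rw [if_neg hv1]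
          rw [if_pos hRg, hAv, hBv, hGv, hCv, wz v hv3]
          ring_nf; exact le_rfl
        · by_cases hR : Rg x m v
          · have hR' : Rg x (m+1) v ∧ v ≠ vc := by
              obtain ⟨h1, h2⟩ := hR
              rcases h1 with h1 | h1
              · rcases Nat.lt_or_ge m v.1.val with hlt | hge
                · exact ⟨⟨Or.inl (by omega), h2⟩, hv1⟩
                · -- v.1.val = m
                  have hcol : v.1.val = m := by omega
                  exfalso
                  by_cases hrow : v.2 = x.2
                  · exact hv1 (Prod.ext (Fin.ext (by omega)) (hrow.trans hvc2.symm))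
                  · exact hv2 (Prod.ext (Fin.ext (by omega))
                      (fin2_eq_of_ne hrow hvc'2))
              · exact absurd h1 hv3
            have hGv : G v = wt x v * (q v : ℝ) := by rw [hG]; dsimp only; rw [if_pos hR']
            have hAv : A v = 0 := by rw [hA]; dsimp only; rw [if_neg hv3]
            have hBv : B v = 0 := by rw [hB]; dsimp only; rw [if_neg hv2]
            have hCv : Cc v = 0 := by rw [hCc]; dsimp only; rw [if_neg hv1]
            rw [if_pos hR, hGv, hAv, hBv, hCv]
            ring_nf; exact le_rfl
          · rw [if_neg hR]
            have := hGnn v; have := hAnn v; have := hBnn v; have := hCcnn v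
            linarith
  -- new weight decomposition
  have newdecomp : ∀ v, (if Rg x (m+1) v then wt x v * (q₂ v : ℝ) else 0)
      = G v + (if v = vc then 2 * ε * (q₂ v : ℝ) else 0) := by
    intro v
    by_cases hv1 : v = vc
    · subst hv1
      have hRg : Rg x (m+1) v := ⟨Or.inr ⟨by omega, hvc2⟩, by omega⟩
      have hGv : G v = 0 := by rw [hG]; dsimp only; rw [if_neg]; simp
      rw [if_pos hRg, if_pos rfl, hGv, wvc]; ring
    · rw [if_neg hv1]
      by_cases hR : Rg x (m+1) v
      · have hne2 : v ≠ vc' := by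
          intro h; subst h
          obtain ⟨h1, _⟩ := hR
          rcases h1 with h1 | ⟨_, h2⟩
          · omega
          · exact hvc'2 h2
        have hne3 : ¬(v.1.val + 1 = m ∧ v.2 = x.2) := by
          intro ⟨h1, _⟩
          obtain ⟨h2, _⟩ := hR
          rcases h2 with h2 | ⟨h2, _⟩ <;> omega
        have hq : q₂ v = q v := Hoff v hv1 hne2 hne3
        have hGv : G v = wt x v * (q v : ℝ) := by rw [hG]; dsimp only; rw [if_pos ⟨hR, hv1⟩]
        rw [if_pos hR, hGv, hq]; ring
      · have hGv : G v = 0 := by rw [hG]; dsimp only; rw [if_neg (fun h => hR h.1)]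
        rw [if_neg hR, hGv]; ring
  -- sum computations
  have sumB : ∑ v, B v = ε * (q vc' : ℝ) := by
    rw [hB]; rw [Finset.sum_ite_eq' Finset.univ vc' (fun v => ε * (q v : ℝ))]
    simp
  have sumCc : ∑ v, Cc v = 2 * ε * (q vc : ℝ) := by
    rw [hCc]; rw [Finset.sum_ite_eq' Finset.univ vc (fun v => 2 * ε * (q v : ℝ))]
    simp
  have sumA : ∑ v, A v
      = ε * ((∑ v, if v.1.val + 1 = m ∧ v.2 = x.2 then q v else 0 : ℕ) : ℝ) := by
    rw [hA]
    push_cast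
    rw [Finset.mul_sum]
    refine Finset.sum_congr rfl (fun v _ => ?_)
    by_cases h : v.1.val + 1 = m ∧ v.2 = x.2 <;> simp [h]
  have sumnew : WA x (m+1) q₂ = (∑ v, G v) + 2 * ε * (q₂ vc : ℝ) := by
    rw [WA]
    rw [Finset.sum_congr rfl (fun v _ => newdecomp v), Finset.sum_add_distrib]
    rw [Finset.sum_ite_eq' Finset.univ vc (fun v => 2 * ε * (q₂ v : ℝ))]
    simp
  have sumold : WA x m q ≤ (∑ v, G v) + (∑ v, A v) + (∑ v, B v) + (∑ v, Cc v) := by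
    rw [WA]
    calc ∑ v, (if Rg x m v then wt x v * (q v : ℝ) else 0)
        ≤ ∑ v, (G v + A v + B v + Cc v) := Finset.sum_le_sum (fun v _ => point v)
      _ = _ := by rw [Finset.sum_add_distrib, Finset.sum_add_distrib, Finset.sum_add_distrib]
  -- final arithmetic
  have hCr : ((∑ v, if v.1.val + 1 = m ∧ v.2 = x.2 then q v else 0 : ℕ) : ℝ)
      + (q vc' : ℝ) + 2 * (q vc : ℝ) ≤ 2 * (q₂ vc : ℝ) + 1 := by
    exact_mod_cast C
  have hmul := mul_le_mul_of_nonneg_left hCr (le_of_lt hε0)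
  rw [sumnew]
  calc WA x m q ≤ (∑ v, G v) + (∑ v, A v) + (∑ v, B v) + (∑ v, Cc v) := sumold
    _ = (∑ v, G v) + ε * (((∑ v, if v.1.val + 1 = m ∧ v.2 = x.2 then q v else 0 : ℕ) : ℝ)
          + (q vc' : ℝ) + 2 * (q vc : ℝ)) := by rw [sumA, sumB, sumCc]; ring
    _ ≤ (∑ v, G v) + ε * (2 * (q₂ vc : ℝ) + 1) := by linarith
    _ = (∑ v, G v) + 2 * ε * (q₂ vc : ℝ) + ε := by ring


def oj (x : Fin n × Fin 2) : Fin 2 := ⟨1 - x.2.val, by omega⟩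

lemma oj_ne (x : Fin n × Fin 2) : oj x ≠ x.2 := by
  have := x.2.isLt
  simp only [oj, Ne, Fin.ext_iff]
  omega

lemma clear_step (x : Fin n × Fin 2) (m : ℕ) (hm : m ≤ x.1.val) (q : Fin n × Fin 2 → ℕ) :
    ∃ q₂, RubblingReachOn (ladder n) {v | v.1 ≤ x.1} q q₂ ∧
      WA x m q ≤ WA x (m + 1) q₂ + ((1:ℝ)/2) ^ (x.1.val - m + 1) := by
  have hmn : m < n := lt_of_le_of_lt hm x.1.isLt
  set S : Set (Fin n × Fin 2) := {v | v.1 ≤ x.1} with hS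
  set vc : Fin n × Fin 2 := (⟨m, hmn⟩, x.2) with hvc
  set vc' : Fin n × Fin 2 := (⟨m, hmn⟩, oj x) with hvc'
  have hvcS : vc ∈ S := by
    rw [hS]; simp only [Set.mem_setOf_eq, Fin.le_def]; exact hm
  have hvc'S : vc' ∈ S := by
    rw [hS]; simp only [Set.mem_setOf_eq, Fin.le_def]; exact hm
  have hne_cc' : vc ≠ vc' := fun h => oj_ne x (congrArg Prod.snd h).symm
  have adj_c'c : (ladder n).Adj vc' vc := ladder_adj.mpr (Or.inr ⟨rfl, oj_ne x⟩)
  have hvc1 : vc.1.val = m := rfl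
  have hvc2 : vc.2 = x.2 := rfl
  have hvc'1 : vc'.1.val = m := rfl
  have hvc'2 : vc'.2 ≠ x.2 := oj_ne x
  rcases Nat.eq_zero_or_pos m with hm0 | hm1
  · -- m = 0 : no column to the left, just pair up vc' into vc
    subst hm0
    set q₂ : Fin n × Fin 2 → ℕ :=
      fun y => if y = vc' then q vc' % 2 else if y = vc then q vc + q vc' / 2 else q y with hq₂
    refine ⟨q₂, reach_pairs hvc'S hvcS adj_c'c q, ?_⟩
    have e2c : q₂ vc = q vc + q vc' / 2 := by
      simp only [hq₂]; rw [if_neg hne_cc']; simp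
    refine WA_compare x 0 hm q q₂ vc vc' hvc1 hvc2 hvc'1 hvc'2 ?_ ?_
    · intro v hv1 hv2 _
      simp only [hq₂]; rw [if_neg hv2, if_neg hv1]
    · have hzq : (∑ v : Fin n × Fin 2, if v.1.val + 1 = 0 ∧ v.2 = x.2 then q v else 0) = 0 :=
        Finset.sum_eq_zero (fun v _ => by rw [if_neg]; omega)
      rw [hzq, e2c]
      omega
  · -- m ≥ 1
    have hzn : m - 1 < n := by omega
    set z : Fin n × Fin 2 := (⟨m - 1, hzn⟩, x.2) with hz
    have hzS : z ∈ S := by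
      rw [hS]; simp only [Set.mem_setOf_eq, Fin.le_def]
      exact (by omega : m - 1 ≤ x.1.val)
    have hz_vc : z ≠ vc := by
      intro h
      have h2 : (m - 1 : ℕ) = m := congrArg (fun v : Fin n × Fin 2 => v.1.val) h
      omega
    have hz_vc' : z ≠ vc' := by
      intro h
      have h2 : (m - 1 : ℕ) = m := congrArg (fun v : Fin n × Fin 2 => v.1.val) h
      omega
    have adj_zc : (ladder n).Adj z vc := by
      refine ladder_adj.mpr (Or.inl ⟨Or.inl ?_, rfl⟩)
      show m - 1 + 1 = m
      omega
    have hPz : ∀ v : Fin n × Fin 2, (v.1.val + 1 = m ∧ v.2 = x.2) ↔ v = z := by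
      intro v
      constructor
      · intro ⟨h1, h2⟩
        exact Prod.ext (Fin.ext (show v.1.val = m - 1 by omega)) h2
      · intro h; subst h
        exact ⟨show m - 1 + 1 = m by omega, rfl⟩
    have hzq : (∑ v : Fin n × Fin 2, if v.1.val + 1 = m ∧ v.2 = x.2 then q v else 0) = q z := by
      rw [Finset.sum_congr rfl (fun v _ => by rw [if_congr (hPz v) rfl rfl])]
      rw [Finset.sum_ite_eq' Finset.univ z q]
      simp
    set q₁ : Fin n × Fin 2 → ℕ :=
      fun y => if y = z then q z % 2 else if y = vc then q vc + q z / 2 else q y with hq₁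
    have reach1 : RubblingReachOn (ladder n) S q q₁ := reach_pairs hzS hvcS adj_zc q
    have e1z : q₁ z = q z % 2 := by simp only [hq₁]; simp
    have e1c : q₁ vc = q vc + q z / 2 := by
      simp only [hq₁]; rw [if_neg (Ne.symm hz_vc)]; simp
    have e1c' : q₁ vc' = q vc' := by
      simp only [hq₁]; rw [if_neg (Ne.symm hz_vc'), if_neg (Ne.symm hne_cc')]
    by_cases hstr : q₁ z = 1 ∧ 1 ≤ q₁ vc'
    · -- use the stray pebble at z together with one pebble at vc' by a strict rubbling move
      set q₁' : Fin n × Fin 2 → ℕ :=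
        fun y => if y = z then q₁ y - 1 else if y = vc' then q₁ y - 1 else if y = vc then q₁ y + 1
          else q₁ y with hq₁'
      have reach2 : RubblingReachOn (ladder n) S q₁ q₁' :=
        reach_strict hzS hvc'S hvcS hz_vc' adj_zc adj_c'c (le_of_eq hstr.1.symm) hstr.2
      have e2c : q₁' vc = q₁ vc + 1 := by
        simp only [hq₁']; rw [if_neg (Ne.symm hz_vc), if_neg hne_cc']; simp
      have e2c' : q₁' vc' = q₁ vc' - 1 := by
        simp only [hq₁']; rw [if_neg (Ne.symm hz_vc')]; simp
      set q₂ : Fin n × Fin 2 → ℕ :=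
        fun y => if y = vc' then q₁' vc' % 2 else if y = vc then q₁' vc + q₁' vc' / 2 else q₁' y
        with hq₂
      have reach3 : RubblingReachOn (ladder n) S q₁' q₂ := reach_pairs hvc'S hvcS adj_c'c q₁'
      refine ⟨q₂, Relation.ReflTransGen.trans reach1 (Relation.ReflTransGen.trans reach2 reach3),
        ?_⟩
      have e3c : q₂ vc = q₁' vc + q₁' vc' / 2 := by
        simp only [hq₂]; rw [if_neg hne_cc']; simp
      refine WA_compare x m hm q q₂ vc vc' hvc1 hvc2 hvc'1 hvc'2 ?_ ?_
      · intro v hv1 hv2 hv3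
        have hvz : v ≠ z := fun h => hv3 ((hPz v).mpr h)
        simp only [hq₂]; rw [if_neg hv2, if_neg hv1]
        simp only [hq₁']; rw [if_neg hvz, if_neg hv2, if_neg hv1]
        simp only [hq₁]; rw [if_neg hvz, if_neg hv1]
      · rw [hzq, e3c, e2c, e2c', e1c, e1c']
        have h1 := hstr.1
        rw [e1z] at h1
        have h2 := hstr.2
        rw [e1c'] at h2
        omega
    · -- no strict move available (or not needed)
      set q₂ : Fin n × Fin 2 → ℕ :=
        fun y => if y = vc' then q₁ vc' % 2 else if y = vc then q₁ vc + q₁ vc' / 2 else q₁ y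
        with hq₂
      have reach3 : RubblingReachOn (ladder n) S q₁ q₂ := reach_pairs hvc'S hvcS adj_c'c q₁
      refine ⟨q₂, Relation.ReflTransGen.trans reach1 reach3, ?_⟩
      have e3c : q₂ vc = q₁ vc + q₁ vc' / 2 := by
        simp only [hq₂]; rw [if_neg hne_cc']; simp
      refine WA_compare x m hm q q₂ vc vc' hvc1 hvc2 hvc'1 hvc'2 ?_ ?_
      · intro v hv1 hv2 hv3
        have hvz : v ≠ z := fun h => hv3 ((hPz v).mpr h)
        simp only [hq₂]; rw [if_neg hv2, if_neg hv1]
        simp only [hq₁]; rw [if_neg hvz, if_neg hv1]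
      · rw [hzq, e3c, e1c, e1c']
        rw [e1z, e1c'] at hstr
        omega


lemma WA_top (x : Fin n × Fin 2) (q : Fin n × Fin 2 → ℕ) :
    WA x (x.1.val + 1) q = (q x : ℝ) := by
  rw [WA]
  have key : ∀ v : Fin n × Fin 2, (if Rg x (x.1.val + 1) v then wt x v * (q v : ℝ) else 0)
      = (if v = x then (q v : ℝ) else 0) := by
    intro v
    by_cases h : v = x
    · subst h
      rw [if_pos ⟨Or.inr ⟨rfl, rfl⟩, le_rfl⟩, if_pos rfl, wt_self, one_mul]
    · rw [if_neg, if_neg h]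
      intro ⟨h1, h2⟩
      rcases h1 with h1 | ⟨h1a, h1b⟩
      · omega
      · exact h (Prod.ext (Fin.ext (by omega)) h1b)
  rw [Finset.sum_congr rfl (fun v _ => key v), Finset.sum_ite_eq' Finset.univ x _]
  simp

lemma main_ind : ∀ (k : ℕ) (x : Fin n × Fin 2) (m : ℕ), m + k = x.1.val →
    ∀ q, ∃ q', RubblingReachOn (ladder n) {v | v.1 ≤ x.1} q q' ∧
      WA x m q - 1 + ((1:ℝ)/2) ^ (k + 1) ≤ (q' x : ℝ) := by
  intro k
  induction k with
  | zero =>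
    intro x m hmk q
    obtain ⟨q₂, hreach, hW⟩ := clear_step x m (le_of_eq hmk) q
    refine ⟨q₂, hreach, ?_⟩
    have he : x.1.val - m + 1 = 1 := by omega
    rw [he] at hW
    have hm1 : m + 1 = x.1.val + 1 := by omega
    rw [hm1, WA_top] at hW
    norm_num at hW ⊢
    linarith
  | succ k ih =>
    intro x m hmk q
    obtain ⟨q₂, hreach, hW⟩ := clear_step x m (by omega) q
    obtain ⟨q', hreach', hW'⟩ := ih x (m + 1) (by omega) q₂
    refine ⟨q', Relation.ReflTransGen.trans hreach hreach', ?_⟩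
    have he : x.1.val - m + 1 = k + 2 := by omega
    rw [he] at hW
    have hp : ((1:ℝ)/2) ^ (k + 1) = 2 * ((1:ℝ)/2) ^ (k + 2) := by
      rw [pow_succ]; ring
    rw [hp] at hW'
    linarith

lemma Lw_nonneg (p : Fin n × Fin 2 → ℕ) (x : Fin n × Fin 2) : 0 ≤ Lw n p x := by
  rw [Lw]
  refine Finset.sum_nonneg (fun v _ => ?_)
  split
  · positivity
  · exact le_rfl

lemma WA_zero_eq_Lw (x : Fin n × Fin 2) (p : Fin n × Fin 2 → ℕ) :
    WA x 0 (fun v => if v.1 ≤ x.1 then p v else 0) = Lw n p x := by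
  rw [WA, Lw]
  refine Finset.sum_congr rfl (fun v _ => ?_)
  by_cases h : v.1 ≤ x.1
  · have hRg : Rg x 0 v := ⟨Or.inl (Nat.zero_le _), Fin.le_def.mp h⟩
    rw [if_pos hRg, if_pos h]
    simp only [if_pos h, wt]
  · rw [if_neg, if_neg h]
    intro ⟨_, h2⟩
    exact h (Fin.le_def.mpr h2)

lemma Wt_init_eq_Lw (x : Fin n × Fin 2) (p : Fin n × Fin 2 → ℕ) :
    Wt x (fun v => if v.1 ≤ x.1 then p v else 0) = Lw n p x := by
  rw [Wt, Lw]
  refine Finset.sum_congr rfl (fun v _ => ?_)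
  by_cases h : v.1 ≤ x.1
  · simp only [if_pos h, wt]
  · simp only [if_neg h]
    simp

lemma L_upper (x : Fin n × Fin 2) (p : Fin n × Fin 2 → ℕ) (k : ℕ)
    (hk : LeftKReachable n p x k) : (k : ℝ) ≤ Lw n p x := by
  obtain ⟨q, hr, hq⟩ := hk
  have h1 : (q x : ℝ) ≤ Wt x q := by
    have := Finset.single_le_sum (f := fun v => wt x v * (q v : ℝ))
      (fun v _ => mul_nonneg (le_of_lt (wt_pos x v)) (Nat.cast_nonneg _)) (Finset.mem_univ x)
    rw [wt_self, one_mul] at this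
    exact this
  have h2 := Wt_reach hr x
  have h3 : (k : ℝ) ≤ (q x : ℝ) := Nat.cast_le.mpr hq
  rw [← Wt_init_eq_Lw]
  linarith

lemma L_lower (x : Fin n × Fin 2) (p : Fin n × Fin 2 → ℕ) :
    LeftKReachable n p x ⌊Lw n p x⌋₊ := by
  obtain ⟨q', hr, hq⟩ := main_ind x.1.val x 0 (by omega) (fun v => if v.1 ≤ x.1 then p v else 0)
  refine ⟨q', hr, ?_⟩
  rw [WA_zero_eq_Lw] at hq
  have hW0 := Lw_nonneg p x
  have hfl : (⌊Lw n p x⌋₊ : ℝ) ≤ Lw n p x := Nat.floor_le hW0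
  have hpow : (0:ℝ) < ((1:ℝ)/2) ^ (x.1.val + 1) := pow_pos (by norm_num) _
  have hlt : (⌊Lw n p x⌋₊ : ℝ) < (q' x : ℝ) + 1 := by linarith
  exact Nat.lt_add_one_iff.mp (by exact_mod_cast hlt)

theorem Lnum_eq (p : Fin n × Fin 2 → ℕ) (x : Fin n × Fin 2) :
    (Lnum n p x : ℤ) = ⌊Lw n p x⌋ := by
  have hW0 := Lw_nonneg p x
  have hub : ∀ k ∈ {k | LeftKReachable n p x k}, k ≤ ⌊Lw n p x⌋₊ :=
    fun k hk => Nat.le_floor (L_upper x p k hk)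
  have hmem : ⌊Lw n p x⌋₊ ∈ {k | LeftKReachable n p x k} := L_lower x p
  have h0 : (0 : ℕ) ∈ {k | LeftKReachable n p x k} :=
    ⟨_, Relation.ReflTransGen.refl, Nat.zero_le _⟩
  have heq : Lnum n p x = ⌊Lw n p x⌋₊ :=
    le_antisymm (csSup_le ⟨0, h0⟩ hub) (le_csSup ⟨⌊Lw n p x⌋₊, hub⟩ hmem)
  rw [heq]
  exact Int.natCast_floor_eq_floor hW0



/-- the left-right reflection of the ladder -/
def rv (v : Fin n × Fin 2) : Fin n × Fin 2 := (v.1.rev, v.2)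

lemma rv_rv (v : Fin n × Fin 2) : rv (rv v) = v := by
  simp [rv]

lemma rv_adj {u v : Fin n × Fin 2} : (ladder n).Adj (rv u) (rv v) ↔ (ladder n).Adj u v := by
  rw [ladder_adj, ladder_adj]
  have h1 := u.1.isLt
  have h2 := v.1.isLt
  simp only [rv, Fin.ext_iff, Fin.val_rev, ne_eq]
  omega

lemma rv_dist (x v : Fin n × Fin 2) :
    (ladder n).dist (rv x) (rv v) = (ladder n).dist x v := by
  rw [ladder_dist, ladder_dist]
  unfold dF
  have h1 := x.1.isLt
  have h2 := v.1.isLt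
  have hc : cdist (rv x).1.val (rv v).1.val = cdist x.1.val v.1.val := by
    simp only [rv, Fin.val_rev]
    unfold cdist
    omega
  have hr : ((rv x).2 = (rv v).2) ↔ (x.2 = v.2) := by simp [rv]
  rw [hc, if_congr hr rfl rfl]

lemma rv_iff (a b : Fin n × Fin 2) : a = rv b ↔ rv a = b := by
  constructor
  · intro h; rw [h, rv_rv]
  · intro h; rw [← h, rv_rv]

lemma step_rv {S : Set (Fin n × Fin 2)} {q q' : Fin n × Fin 2 → ℕ}
    (h : RubblingStepOn (ladder n) S q q') :
    RubblingStepOn (ladder n) (rv ⁻¹' S) (q ∘ rv) (q' ∘ rv) := by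
  rcases h with ⟨v, u, hv, hu, hadj, h2, rfl⟩ | ⟨v, w, u, hv, hw, hu, hvw, ha1, ha2, hb1, hb2, rfl⟩
  · refine Or.inl ⟨rv v, rv u, ?_, ?_, ?_, ?_, ?_⟩
    · show rv (rv v) ∈ S; rw [rv_rv]; exact hv
    · show rv (rv u) ∈ S; rw [rv_rv]; exact hu
    · rw [show v = rv (rv v) from (rv_rv v).symm, show u = rv (rv u) from (rv_rv u).symm] at hadj
      exact rv_adj.mp hadj
    · show 2 ≤ q (rv (rv v)); rw [rv_rv]; exact h2
    · funext y
      show (if rv y = v then q (rv y) - 2 else if rv y = u then q (rv y) + 1 else q (rv y))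
        = (if y = rv v then q (rv y) - 2 else if y = rv u then q (rv y) + 1 else q (rv y))
      rw [if_congr ((rv_iff y v).symm) rfl rfl, if_congr ((rv_iff y u).symm) rfl rfl]
  · refine Or.inr ⟨rv v, rv w, rv u, ?_, ?_, ?_, ?_, ?_, ?_, ?_, ?_, ?_⟩
    · show rv (rv v) ∈ S; rw [rv_rv]; exact hv
    · show rv (rv w) ∈ S; rw [rv_rv]; exact hw
    · show rv (rv u) ∈ S; rw [rv_rv]; exact hu
    · intro hc; exact hvw (by rw [← rv_rv v, hc, rv_rv])
    · rw [show v = rv (rv v) from (rv_rv v).symm, show u = rv (rv u) from (rv_rv u).symm] at ha1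
      exact rv_adj.mp ha1
    · rw [show w = rv (rv w) from (rv_rv w).symm, show u = rv (rv u) from (rv_rv u).symm] at ha2
      exact rv_adj.mp ha2
    · show 1 ≤ q (rv (rv v)); rw [rv_rv]; exact hb1
    · show 1 ≤ q (rv (rv w)); rw [rv_rv]; exact hb2
    · funext y
      show (if rv y = v then q (rv y) - 1 else if rv y = w then q (rv y) - 1
          else if rv y = u then q (rv y) + 1 else q (rv y))
        = (if y = rv v then q (rv y) - 1 else if y = rv w then q (rv y) - 1
          else if y = rv u then q (rv y) + 1 else q (rv y))
      rw [if_congr ((rv_iff y v).symm) rfl rfl, if_congr ((rv_iff y w).symm) rfl rfl,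
        if_congr ((rv_iff y u).symm) rfl rfl]

lemma reach_rv {S : Set (Fin n × Fin 2)} {q q' : Fin n × Fin 2 → ℕ}
    (h : RubblingReachOn (ladder n) S q q') :
    RubblingReachOn (ladder n) (rv ⁻¹' S) (q ∘ rv) (q' ∘ rv) :=
  Relation.ReflTransGen.lift (fun q => q ∘ rv) (fun _ _ hab => step_rv hab) _ _ h

lemma rev_le_iff' {a b : Fin n} : a ≤ b.rev ↔ b ≤ a.rev := by
  rw [Fin.le_def, Fin.le_def, Fin.val_rev, Fin.val_rev]
  have := a.isLt; have := b.isLt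
  omega

lemma rev_le_rev' {a b : Fin n} : a.rev ≤ b.rev ↔ b ≤ a := by
  rw [Fin.le_def, Fin.le_def, Fin.val_rev, Fin.val_rev]
  have := a.isLt; have := b.isLt
  omega

lemma right_iff_left (p : Fin n × Fin 2 → ℕ) (x : Fin n × Fin 2) (k : ℕ) :
    RightKReachable n p x k ↔ LeftKReachable n (p ∘ rv) (rv x) k := by
  constructor
  · intro ⟨q, hr, hk⟩
    refine ⟨q ∘ rv, ?_, ?_⟩
    · have h := reach_rv hr
      have hset : rv ⁻¹' {v | x.1 ≤ v.1} = {v | v.1 ≤ (rv x).1} := by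
        ext v
        show x.1 ≤ (rv v).1 ↔ v.1 ≤ (rv x).1
        exact rev_le_iff'
      have hinit : (fun v => if x.1 ≤ v.1 then p v else 0) ∘ rv
          = (fun v => if v.1 ≤ (rv x).1 then (p ∘ rv) v else 0) := by
        funext v
        show (if x.1 ≤ (rv v).1 then p (rv v) else 0)
          = (if v.1 ≤ (rv x).1 then p (rv v) else 0)
        exact if_congr rev_le_iff' rfl rfl
      rw [hset, hinit] at h
      exact h
    · show k ≤ q (rv (rv x)); rw [rv_rv]; exact hk
  · intro ⟨q, hr, hk⟩
    refine ⟨q ∘ rv, ?_, ?_⟩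
    · have h := reach_rv hr
      have hset : rv ⁻¹' {v | v.1 ≤ (rv x).1} = {v | x.1 ≤ v.1} := by
        ext v
        show (rv v).1 ≤ (rv x).1 ↔ x.1 ≤ v.1
        exact rev_le_rev'
      have hinit : (fun v => if v.1 ≤ (rv x).1 then (p ∘ rv) v else 0) ∘ rv
          = (fun v => if x.1 ≤ v.1 then p v else 0) := by
        funext v
        show (if (rv v).1 ≤ (rv x).1 then p (rv (rv v)) else 0)
          = (if x.1 ≤ v.1 then p v else 0)
        rw [rv_rv]
        exact if_congr rev_le_rev' rfl rfl
      rw [hset, hinit] at h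
      exact h
    · exact hk

lemma Rnum_eq_Lnum (p : Fin n × Fin 2 → ℕ) (x : Fin n × Fin 2) :
    Rnum n p x = Lnum n (p ∘ rv) (rv x) := by
  unfold Rnum Lnum
  congr 1
  ext k
  exact right_iff_left p x k

noncomputable def rvEquiv : (Fin n × Fin 2) ≃ (Fin n × Fin 2) :=
  ⟨rv, rv, rv_rv, rv_rv⟩

lemma Rw_eq_Lw (p : Fin n × Fin 2 → ℕ) (x : Fin n × Fin 2) :
    Rw n p x = Lw n (p ∘ rv) (rv x) := by
  rw [Rw, Lw]
  refine Fintype.sum_equiv rvEquiv _ _ (fun v => ?_)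
  show (if x.1 ≤ v.1 then ((1:ℝ)/2) ^ ((ladder n).dist x v) * (p v : ℝ) else 0)
    = (if (rv v).1 ≤ (rv x).1 then ((1:ℝ)/2) ^ ((ladder n).dist (rv x) (rv v)) * ((p ∘ rv) (rv v) : ℝ) else 0)
  rw [rv_dist]
  have : (p ∘ rv) (rv v) = p v := by show p (rv (rv v)) = p v; rw [rv_rv]
  rw [this]
  exact if_congr rev_le_rev'.symm rfl rfl

end LadderProof

/-- `L_p(x) = ⌊Lw_p(x)⌋` and `R_p(x) = ⌊Rw_p(x)⌋`. -/
theorem weight_floor (n : ℕ) (p : Fin n × Fin 2 → ℕ) (x : Fin n × Fin 2) :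
    (Lnum n p x : ℤ) = ⌊Lw n p x⌋ ∧ (Rnum n p x : ℤ) = ⌊Rw n p x⌋ := by
  constructor
  · exact LadderProof.Lnum_eq p x
  · rw [LadderProof.Rnum_eq_Lnum, LadderProof.Rw_eq_Lw]
    exact LadderProof.Lnum_eq _ _
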